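/- arXiv:1208.0935 — 3 statements merged into one kernel-verified Lean document; each statement's English description precedes it below -/
import Mathlib

section
/- Let b > m ≥ 0, c > 0, q = (b-m)/c, and let u_t = δ q/(δ + (q-δ)e^{-qct}) with 0 < δ < q. Suppose ρ: [0,∞) → ℝ is differentiable, satisfies ρ(0) ≥ δ, and ρ'(t) ≥ (b-m)ρ(t) - cρ(t)² whenever 0 < ρ(t) < q, with 0 < ρ(t) < q for all t. Then ρ(t) ≥ u_t for all t ≥ 0, and consequently ρ(t) → q as t → +∞. -/
open Filter Real

/-- Comparison principle: a solution of the logistic differential inequality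
staying in `(0, q)` and starting above `δ` dominates the explicit logistic
solution `u` starting at `δ`, hence converges to the carrying capacity `q`. -/
theorem stmt_11 (b m c q δ : ℝ) (hm : 0 ≤ m) (hbm : m < b) (hc : 0 < c)
    (hq : q = (b - m) / c) (hδ : 0 < δ) (hδq : δ < q)
    (u : ℝ → ℝ)
    (hu : ∀ t : ℝ, u t = δ * q / (δ + (q - δ) * Real.exp (-q * c * t)))
    (ρ : ℝ → ℝ)
    (hdiff : ∀ t : ℝ, 0 ≤ t → DifferentiableAt ℝ ρ t)
    (hbounds : ∀ t : ℝ, 0 ≤ t → 0 < ρ t ∧ ρ t < q)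
    (hineq : ∀ t : ℝ, 0 ≤ t → deriv ρ t ≥ (b - m) * ρ t - c * (ρ t) ^ 2)
    (hinit : ρ 0 ≥ δ) :
    (∀ t : ℝ, 0 ≤ t → ρ t ≥ u t) ∧
      Filter.Tendsto ρ Filter.atTop (nhds q) := by
  have hqpos : 0 < q := lt_trans hδ hδq
  have hcq : c * q = b - m := by
    rw [hq]; field_simp
  -- The transformed function
  set F : ℝ → ℝ := fun t => Real.log (ρ t) - Real.log (q - ρ t) - c * q * t with hF
  -- derivative facts at each t ≥ 0
  have hFderiv : ∀ t : ℝ, 0 ≤ t →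
      HasDerivAt F (deriv ρ t / ρ t + deriv ρ t / (q - ρ t) - c * q) t := by
    intro t ht
    obtain ⟨h1, h2⟩ := hbounds t ht
    have hρ' : HasDerivAt ρ (deriv ρ t) t := (hdiff t ht).hasDerivAt
    have hlog1 : HasDerivAt (fun s => Real.log (ρ s)) (deriv ρ t / ρ t) t :=
      hρ'.log h1.ne'
    have hsub : HasDerivAt (fun s => q - ρ s) (-deriv ρ t) t :=
      by have h := (hasDerivAt_const t q).sub hρ'; rwa [zero_sub] at h
    have hlog2 : HasDerivAt (fun s => Real.log (q - ρ s)) (-deriv ρ t / (q - ρ t)) t :=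
      hsub.log (by linarith)
    have hlin : HasDerivAt (fun s : ℝ => c * q * s) (c * q) t := by
      simpa using (hasDerivAt_id t).const_mul (c * q)
    have := (hlog1.sub hlog2).sub hlin
    exact this.congr_deriv (by ring)
  have hFcont : ContinuousOn F (Set.Ici (0 : ℝ)) := by
    intro t ht
    exact ((hFderiv t ht).differentiableAt.continuousAt).continuousWithinAt
  have hFdiff : DifferentiableOn ℝ F (interior (Set.Ici (0 : ℝ))) := by
    rw [interior_Ici]
    intro t ht
    exact ((hFderiv t (le_of_lt ht)).differentiableAt).differentiableWithinAt
  have hderiv_nonneg : ∀ t ∈ interior (Set.Ici (0 : ℝ)), 0 ≤ deriv F t := by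
    rw [interior_Ici]
    intro t ht
    have ht' : (0:ℝ) ≤ t := le_of_lt ht
    obtain ⟨h1, h2⟩ := hbounds t ht'
    rw [(hFderiv t ht').deriv]
    have hineq' : deriv ρ t ≥ c * ρ t * (q - ρ t) := by
      have := hineq t ht'
      nlinarith [this]
    have h3 : 0 < q - ρ t := by linarith
    have e1 : c * (q - ρ t) ≤ deriv ρ t / ρ t := by
      rw [le_div_iff₀ h1]; nlinarith
    have e2 : c * ρ t ≤ deriv ρ t / (q - ρ t) := by
      rw [le_div_iff₀ h3]; nlinarith
    nlinarith
  have hmono : MonotoneOn F (Set.Ici (0 : ℝ)) :=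
    monotoneOn_of_deriv_nonneg (convex_Ici 0) hFcont hFdiff hderiv_nonneg
  -- main comparison
  have hcomp : ∀ t : ℝ, 0 ≤ t → ρ t ≥ u t := by
    intro t ht
    obtain ⟨h1, h2⟩ := hbounds t ht
    obtain ⟨h10, h20⟩ := hbounds 0 le_rfl
    have hF0 : F 0 ≤ F t := hmono Set.self_mem_Ici ht ht
    -- F 0 ≥ log δ - log (q - δ)
    have hFinit : Real.log δ - Real.log (q - δ) ≤ F 0 := by
      simp only [hF]
      have l1 : Real.log δ ≤ Real.log (ρ 0) := Real.log_le_log hδ hinit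
      have l2 : Real.log (q - ρ 0) ≤ Real.log (q - δ) := by
        apply Real.log_le_log (by linarith) (by linarith)
      simp only [mul_zero]
      linarith
    -- key inequality in log-odds
    have hkey : Real.log δ - Real.log (q - δ) + c * q * t ≤
        Real.log (ρ t) - Real.log (q - ρ t) := by
      have : F t = Real.log (ρ t) - Real.log (q - ρ t) - c * q * t := rfl
      have h0 : F 0 = Real.log (ρ 0) - Real.log (q - ρ 0) := by
        simp [hF]
      linarith [hF0, hFinit]
    -- compute log-odds of u t
    set E := Real.exp (-q * c * t) with hE
    have hEpos : 0 < E := Real.exp_pos _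
    have hqδ : 0 < q - δ := by linarith
    have hD : 0 < δ + (q - δ) * E := add_pos hδ (mul_pos hqδ hEpos)
    have hut : u t = δ * q / (δ + (q - δ) * E) := hu t
    have hutpos : 0 < u t := by
      rw [hut]; exact div_pos (by positivity) hD
    have hqu : q - u t = (q - δ) * E * q / (δ + (q - δ) * E) := by
      rw [hut]; field_simp; ring
    have hqupos : 0 < q - u t := by
      rw [hqu]; exact div_pos (mul_pos (mul_pos hqδ hEpos) hqpos) hD
    have hulog : Real.log (u t) - Real.log (q - u t) =
        Real.log δ - Real.log (q - δ) + c * q * t := by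
      rw [hqu, hut]
      rw [Real.log_div (by positivity) hD.ne',
        Real.log_div (ne_of_gt (mul_pos (mul_pos hqδ hEpos) hqpos)) hD.ne',
        Real.log_mul (ne_of_gt (mul_pos hqδ hEpos)) hqpos.ne',
        Real.log_mul hqδ.ne' hEpos.ne',
        Real.log_mul hδ.ne' hqpos.ne', hE, Real.log_exp]
      ring
    -- conclude by monotonicity of log-odds
    by_contra hcon
    push_neg at hcon
    have l1 : Real.log (ρ t) < Real.log (u t) := Real.log_lt_log h1 hcon
    have l2 : Real.log (q - u t) < Real.log (q - ρ t) :=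
      Real.log_lt_log hqupos (by linarith)
    linarith [hkey, hulog]
  refine ⟨hcomp, ?_⟩
  -- limit of u
  have hEtend : Tendsto (fun t : ℝ => Real.exp (-q * c * t)) atTop (nhds 0) := by
    apply Real.tendsto_exp_atBot.comp
    have : Tendsto (fun t : ℝ => (-(q * c)) * t) atTop atBot :=
      tendsto_id.const_mul_atTop_of_neg (by nlinarith)
    convert this using 2 with t
    ring
  have hutend : Tendsto u atTop (nhds q) := by
    have h1 : Tendsto (fun t : ℝ => δ * q / (δ + (q - δ) * Real.exp (-q * c * t)))
        atTop (nhds (δ * q / (δ + (q - δ) * 0))) := by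
      apply Tendsto.div tendsto_const_nhds
      · exact tendsto_const_nhds.add (tendsto_const_nhds.mul hEtend)
      · simp; positivity
    have : δ * q / (δ + (q - δ) * 0) = q := by rw [mul_zero, add_zero, mul_div_cancel_left₀ q hδ.ne']
    rw [this] at h1
    exact h1.congr (fun t => (hu t).symm)
  apply tendsto_of_tendsto_of_tendsto_of_le_of_le' hutend tendsto_const_nhds
  · filter_upwards [eventually_ge_atTop (0:ℝ)] with t ht
    exact hcomp t ht
  · filter_upwards [eventually_ge_atTop (0:ℝ)] with t ht
    exact le_of_lt (hbounds t ht).2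
end

section
/- Let a₊, a₋ ∈ L¹(ℝ^d) be nonnegative, m ≥ 0, and let ρ_t be a classical solution in C_b(ℝ^d) on [0,T) of ∂_t ρ_t(x) = -m ρ_t(x) - ρ_t(x)∫a₋(x-y)ρ_t(y)dy + ∫a₊(x-y)ρ_t(y)dy with ρ_0 ≥ 0. Then ρ_t(x) ≥ 0 for all t ∈ [0,T) and x ∈ ℝ^d, i.e., the kinetic equation preserves positivity. -/
open MeasureTheory

namespace Stmt13Aux

variable {d : ℕ}

lemma conv_integrable (a : (Fin d → ℝ) → ℝ) (ha : Integrable a)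
    (g : BoundedContinuousFunction (Fin d → ℝ) ℝ) (x : Fin d → ℝ) :
    Integrable (fun y => a (x - y) * g y) := by
  have h1 : Integrable (fun y => a (x - y)) := ha.comp_sub_left x
  have h2 : Integrable (fun y => g y * a (x - y)) :=
    h1.bdd_mul g.continuous.aestronglyMeasurable (Filter.Eventually.of_forall fun y => g.norm_coe_le_norm y)
  simpa [mul_comm] using h2

lemma conv_abs_le (a : (Fin d → ℝ) → ℝ) (ha : Integrable a) (han : ∀ x, 0 ≤ a x)
    (g : BoundedContinuousFunction (Fin d → ℝ) ℝ) (x : Fin d → ℝ) :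
    |∫ y, a (x - y) * g y| ≤ (∫ y, a y) * ‖g‖ := by
  have h1 : Integrable (fun y => a (x - y)) := ha.comp_sub_left x
  calc |∫ y, a (x - y) * g y| ≤ ∫ y, |a (x - y) * g y| := by
        simpa only [Real.norm_eq_abs] using
          norm_integral_le_integral_norm (μ := volume) (fun y => a (x - y) * g y)
    _ ≤ ∫ y, a (x - y) * ‖g‖ := by
        refine integral_mono (conv_integrable a ha g x).abs (h1.mul_const _) fun y => ?_
        rw [abs_mul, abs_of_nonneg (han _)]
        exact mul_le_mul_of_nonneg_left
          (by simpa [Real.norm_eq_abs] using g.norm_coe_le_norm y) (han _)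
    _ = (∫ y, a (x - y)) * ‖g‖ := integral_mul_const _ _
    _ = (∫ y, a y) * ‖g‖ := by rw [integral_sub_left_eq_self a volume x]

lemma conv_ge (a : (Fin d → ℝ) → ℝ) (ha : Integrable a) (han : ∀ x, 0 ≤ a x)
    (g : BoundedContinuousFunction (Fin d → ℝ) ℝ) (x : Fin d → ℝ) (c : ℝ)
    (hc : ∀ y, c ≤ g y) : (∫ y, a y) * c ≤ ∫ y, a (x - y) * g y := by
  have h1 : Integrable (fun y => a (x - y)) := ha.comp_sub_left x
  calc (∫ y, a y) * c = (∫ y, a (x - y)) * c := by rw [integral_sub_left_eq_self a volume x]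
    _ = ∫ y, a (x - y) * c := (integral_mul_const _ _).symm
    _ ≤ ∫ y, a (x - y) * g y :=
        integral_mono (h1.mul_const c) (conv_integrable a ha g x) fun y =>
          mul_le_mul_of_nonneg_left (hc y) (han _)

lemma conv_sub (a : (Fin d → ℝ) → ℝ) (ha : Integrable a)
    (g h : BoundedContinuousFunction (Fin d → ℝ) ℝ) (x : Fin d → ℝ) :
    (∫ y, a (x - y) * g y) - ∫ y, a (x - y) * h y = ∫ y, a (x - y) * (g - h) y := by
  rw [← integral_sub (conv_integrable a ha g x) (conv_integrable a ha h x)]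
  congr 1; funext y
  simp [mul_sub]

end Stmt13Aux

open Stmt13Aux

set_option maxHeartbeats 1600000 in
/-- Positivity preservation for the kinetic equation: a classical solution in
`C_b(ℝ^d)` on `[0, T)` with nonnegative initial datum stays nonnegative. -/
theorem stmt_13 (d : ℕ) (m T : ℝ) (hm : 0 ≤ m) (hT : 0 < T)
    (aplus aminus : (Fin d → ℝ) → ℝ)
    (hplus_nonneg : ∀ x, 0 ≤ aplus x) (hminus_nonneg : ∀ x, 0 ≤ aminus x)
    (hplus_int : Integrable aplus) (hminus_int : Integrable aminus)
    (ρ : ℝ → BoundedContinuousFunction (Fin d → ℝ) ℝ)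
    (hcont : Continuous ρ)
    (hode : ∀ t ∈ Set.Ico 0 T, ∀ x : Fin d → ℝ,
      HasDerivAt (fun s => ρ s x)
        (-m * ρ t x - ρ t x * (∫ y, aminus (x - y) * ρ t y)
          + ∫ y, aplus (x - y) * ρ t y) t)
    (hinit : ∀ x, 0 ≤ ρ 0 x) :
    ∀ t ∈ Set.Ico 0 T, ∀ x, 0 ≤ ρ t x := by
  intro t ht
  obtain ⟨ht0, htT⟩ := ht
  -- the negative part functional
  obtain ⟨N, hNdef⟩ : ∃ N : ℝ → ℝ, N = fun s => ‖ρ s ⊓ 0‖ := ⟨_, rfl⟩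
  have hNs : ∀ s, N s = ‖ρ s ⊓ 0‖ := fun s => by rw [hNdef]
  have hNnonneg : ∀ s, 0 ≤ N s := fun s => by rw [hNs]; exact norm_nonneg _
  have hlb : ∀ s y, -(N s) ≤ ρ s y := by
    intro s y
    have h1 : |(ρ s ⊓ 0) y| ≤ N s := by
      rw [hNs]; simpa [Real.norm_eq_abs] using (ρ s ⊓ 0).norm_coe_le_norm y
    have h2 : (ρ s ⊓ 0) y = min (ρ s y) 0 := by simp
    rcases le_or_gt 0 (ρ s y) with h | h
    · linarith [hNnonneg s]
    · rw [h2, min_eq_left h.le, abs_of_neg h] at h1; linarith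
  suffices hNt : N t ≤ 0 by
    intro x; have := hlb t x; linarith
  -- time window
  obtain ⟨b', hb'def⟩ : ∃ b' : ℝ, b' = (t + T) / 2 := ⟨_, rfl⟩
  have htb' : t < b' := by rw [hb'def]; linarith
  have hb'T : b' < T := by rw [hb'def]; linarith
  -- uniform bound on ρ on [0, b']
  obtain ⟨M0, hM0⟩ := (isCompact_Icc (a := (0:ℝ)) (b := b')).exists_bound_of_continuousOn
      hcont.continuousOn
  obtain ⟨M, hMdef⟩ : ∃ M : ℝ, M = max M0 0 := ⟨_, rfl⟩
  have hMnonneg : 0 ≤ M := by rw [hMdef]; exact le_max_right _ _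
  have hMb : ∀ τ ∈ Set.Icc (0:ℝ) b', ‖ρ τ‖ ≤ M := fun τ hτ => by
    rw [hMdef]; exact (hM0 τ hτ).trans (le_max_left _ _)
  have hρb : ∀ τ ∈ Set.Icc (0:ℝ) b', ∀ x, |ρ τ x| ≤ M := by
    intro τ hτ x
    exact le_trans (by simpa [Real.norm_eq_abs] using (ρ τ).norm_coe_le_norm x) (hMb τ hτ)
  -- constants
  obtain ⟨Ap, hApdef⟩ : ∃ Ap : ℝ, Ap = ∫ y, aplus y := ⟨_, rfl⟩
  obtain ⟨Am, hAmdef⟩ : ∃ Am : ℝ, Am = ∫ y, aminus y := ⟨_, rfl⟩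
  have hApn : 0 ≤ Ap := by rw [hApdef]; exact integral_nonneg hplus_nonneg
  have hAmn : 0 ≤ Am := by rw [hAmdef]; exact integral_nonneg hminus_nonneg
  obtain ⟨K, hKdef⟩ : ∃ K : ℝ, K = Am * M + Ap := ⟨_, rfl⟩
  have hKn : 0 ≤ K := by rw [hKdef]; exact add_nonneg (mul_nonneg hAmn hMnonneg) hApn
  obtain ⟨C, hCdef⟩ : ∃ C : ℝ, C = m + 2 * (Am * M) + Ap := ⟨_, rfl⟩
  have hCn : 0 ≤ C := by rw [hCdef]; nlinarith [mul_nonneg hAmn hMnonneg]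
  -- the right-hand side field
  obtain ⟨F, hFdef⟩ : ∃ F : ℝ → (Fin d → ℝ) → ℝ, F = fun τ x =>
    -m * ρ τ x - ρ τ x * (∫ y, aminus (x - y) * ρ τ y) + ∫ y, aplus (x - y) * ρ τ y := ⟨_, rfl⟩
  -- Lipschitz-type estimate
  have hFlip : ∀ τ ∈ Set.Icc (0:ℝ) b', ∀ σ ∈ Set.Icc (0:ℝ) b', ∀ x,
      |F τ x - F σ x| ≤ C * ‖ρ τ - ρ σ‖ := by
    intro τ hτ σ hσ x
    have e1 : |ρ τ x - ρ σ x| ≤ ‖ρ τ - ρ σ‖ := by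
      simpa [Real.norm_eq_abs] using (ρ τ - ρ σ).norm_coe_le_norm x
    have e2 : |∫ y, aminus (x - y) * ρ τ y| ≤ Am * M := by
      rw [hAmdef]
      exact (conv_abs_le aminus hminus_int hminus_nonneg (ρ τ) x).trans
        (mul_le_mul_of_nonneg_left (hMb τ hτ) (integral_nonneg hminus_nonneg))
    have e3 : |ρ σ x| ≤ M := hρb σ hσ x
    have e4 : |(∫ y, aminus (x - y) * ρ τ y) - ∫ y, aminus (x - y) * ρ σ y|
        ≤ Am * ‖ρ τ - ρ σ‖ := by
      rw [conv_sub aminus hminus_int (ρ τ) (ρ σ) x, hAmdef]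
      exact conv_abs_le aminus hminus_int hminus_nonneg (ρ τ - ρ σ) x
    have e5 : |(∫ y, aplus (x - y) * ρ τ y) - ∫ y, aplus (x - y) * ρ σ y|
        ≤ Ap * ‖ρ τ - ρ σ‖ := by
      rw [conv_sub aplus hplus_int (ρ τ) (ρ σ) x, hApdef]
      exact conv_abs_le aplus hplus_int hplus_nonneg (ρ τ - ρ σ) x
    have key : F τ x - F σ x =
        (-m) * (ρ τ x - ρ σ x)
          - ((ρ τ x - ρ σ x) * (∫ y, aminus (x - y) * ρ τ y)
              + ρ σ x * ((∫ y, aminus (x - y) * ρ τ y) - ∫ y, aminus (x - y) * ρ σ y))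
          + ((∫ y, aplus (x - y) * ρ τ y) - ∫ y, aplus (x - y) * ρ σ y) := by
      simp only [hFdef]; ring
    have t0 : |(-m) * (ρ τ x - ρ σ x)| ≤ m * ‖ρ τ - ρ σ‖ := by
      rw [abs_mul, abs_neg, abs_of_nonneg hm]
      exact mul_le_mul_of_nonneg_left e1 hm
    have t1 : |(ρ τ x - ρ σ x) * (∫ y, aminus (x - y) * ρ τ y)|
        ≤ ‖ρ τ - ρ σ‖ * (Am * M) := by
      rw [abs_mul]
      exact mul_le_mul e1 e2 (abs_nonneg _) (norm_nonneg _)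
    have t2 : |ρ σ x * ((∫ y, aminus (x - y) * ρ τ y) - ∫ y, aminus (x - y) * ρ σ y)|
        ≤ M * (Am * ‖ρ τ - ρ σ‖) := by
      rw [abs_mul]
      exact mul_le_mul e3 e4 (abs_nonneg _) hMnonneg
    calc |F τ x - F σ x|
        ≤ |(-m) * (ρ τ x - ρ σ x)
            - ((ρ τ x - ρ σ x) * (∫ y, aminus (x - y) * ρ τ y)
                + ρ σ x * ((∫ y, aminus (x - y) * ρ τ y) - ∫ y, aminus (x - y) * ρ σ y))|
          + |(∫ y, aplus (x - y) * ρ τ y) - ∫ y, aplus (x - y) * ρ σ y| := by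
          rw [key]; exact abs_add_le _ _
      _ ≤ (|(-m) * (ρ τ x - ρ σ x)|
            + |(ρ τ x - ρ σ x) * (∫ y, aminus (x - y) * ρ τ y)
                + ρ σ x * ((∫ y, aminus (x - y) * ρ τ y) - ∫ y, aminus (x - y) * ρ σ y)|)
          + |(∫ y, aplus (x - y) * ρ τ y) - ∫ y, aplus (x - y) * ρ σ y| :=
          add_le_add (abs_sub _ _) le_rfl
      _ ≤ (m * ‖ρ τ - ρ σ‖ + (‖ρ τ - ρ σ‖ * (Am * M) + M * (Am * ‖ρ τ - ρ σ‖)))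
          + Ap * ‖ρ τ - ρ σ‖ :=
          add_le_add (add_le_add t0 ((abs_add_le _ _).trans (add_le_add t1 t2))) e5
      _ = C * ‖ρ τ - ρ σ‖ := by rw [hCdef]; ring
  -- continuity of N
  have hNcont : Continuous N := by
    have l1 : LipschitzWith 1 (fun f : BoundedContinuousFunction (Fin d → ℝ) ℝ => f ⊓ 0) := by
      refine LipschitzWith.of_dist_le_mul fun f g => ?_
      calc dist (f ⊓ 0) (g ⊓ 0) = ‖f ⊓ 0 - g ⊓ 0‖ := dist_eq_norm _ _
        _ ≤ ‖f - g‖ + ‖(0 : BoundedContinuousFunction (Fin d → ℝ) ℝ) - 0‖ :=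
            norm_inf_sub_inf_le_add_norm _ _ _ _
        _ = 1 * dist f g := by rw [sub_zero, norm_zero, add_zero, one_mul, dist_eq_norm]
    rw [hNdef]
    exact continuous_norm.comp (l1.continuous.comp hcont)
  -- initial condition
  have hN0 : N 0 ≤ 0 := by
    have hz : ρ 0 ⊓ 0 = 0 := by
      ext y
      simp [min_eq_right (hinit y)]
    rw [hNs, hz]; simp
  -- the slope estimate
  have hfreq : ∀ s ∈ Set.Ico (0:ℝ) t, ∀ r, K * N s < r →
      ∃ᶠ z in nhdsWithin s (Set.Ioi s), (z - s)⁻¹ * (N z - N s) < r := by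
    intro s hs r hr
    obtain ⟨hs0, hst⟩ := hs
    have hsb' : s < b' := hst.trans htb'
    have hsmem : s ∈ Set.Icc (0:ℝ) b' := ⟨hs0, hsb'.le⟩
    obtain ⟨ε', hε'def⟩ : ∃ e : ℝ, e = (r - K * N s) / (2 * (C + 1)) := ⟨_, rfl⟩
    have hε'pos : 0 < ε' := by
      rw [hε'def]
      exact div_pos (by linarith) (by linarith)
    have hCε' : C * ε' < r - K * N s := by
      have h1 : 0 < r - K * N s := by linarith
      have h2 : C * ε' ≤ (C + 1) * ε' := mul_le_mul_of_nonneg_right (by linarith) hε'pos.le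
      have hC1 : C + 1 ≠ 0 := by linarith
      have h3 : (C + 1) * ε' = (r - K * N s) / 2 := by
        rw [hε'def]; field_simp
      linarith [hε'pos]
    obtain ⟨δ₁, hδ₁pos, hδ₁⟩ := Metric.eventually_nhds_iff.mp
      (Metric.tendsto_nhds.mp (hcont.tendsto s) ε' hε'pos)
    have hden : 0 < 1 + m + Am * M := by nlinarith [mul_nonneg hAmn hMnonneg]
    obtain ⟨h₀, hh₀def⟩ : ∃ h₀ : ℝ, h₀ = 1 / (1 + m + Am * M) := ⟨_, rfl⟩
    have hh₀pos : 0 < h₀ := by rw [hh₀def]; exact div_pos one_pos hden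
    have hh₀le : h₀ * (m + Am * M) ≤ 1 := by
      rw [hh₀def, one_div, inv_mul_le_iff₀ hden]
      nlinarith [mul_nonneg hAmn hMnonneg]
    obtain ⟨δ, hδdef⟩ : ∃ δ : ℝ, δ = min δ₁ (min h₀ (b' - s)) := ⟨_, rfl⟩
    have hδpos : 0 < δ := by rw [hδdef]; exact lt_min hδ₁pos (lt_min hh₀pos (by linarith))
    have main : ∀ z ∈ Set.Ioo s (s + δ), (z - s)⁻¹ * (N z - N s) < r := by
      intro z hz
      obtain ⟨hz1, hz2⟩ := hz
      obtain ⟨dz, hdzdef⟩ : ∃ dz : ℝ, dz = z - s := ⟨_, rfl⟩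
      have hdzpos : 0 < dz := by rw [hdzdef]; linarith
      have hdzδ : dz < δ := by rw [hdzdef]; linarith
      have hdzh₀ : dz ≤ h₀ := by
        rw [hδdef] at hdzδ
        exact le_trans hdzδ.le (le_trans (min_le_right _ _) (min_le_left _ _))
      have hzb' : z ≤ b' := by
        have : δ ≤ b' - s := by rw [hδdef]; exact le_trans (min_le_right _ _) (min_le_right _ _)
        linarith
      have hsub : ∀ τ ∈ Set.Icc s z, τ ∈ Set.Icc (0:ℝ) b' :=
        fun τ hτ => ⟨le_trans hs0 hτ.1, le_trans hτ.2 hzb'⟩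
      have hsubT : ∀ τ ∈ Set.Icc s z, τ ∈ Set.Ico (0:ℝ) T :=
        fun τ hτ => ⟨le_trans hs0 hτ.1, lt_of_le_of_lt (le_trans hτ.2 hzb') hb'T⟩
      have hnear : ∀ τ ∈ Set.Icc s z, ‖ρ τ - ρ s‖ ≤ ε' := by
        intro τ hτ
        have hd : dist τ s < δ₁ := by
          rw [Real.dist_eq, abs_of_nonneg (by linarith [hτ.1])]
          have : δ ≤ δ₁ := by rw [hδdef]; exact min_le_left _ _
          have := hτ.2
          rw [hdzdef] at hdzδ
          linarith
        have := hδ₁ hd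
        rw [dist_eq_norm] at this
        exact this.le
      -- Step A: uniform differentiability estimate
      have stepA : ∀ x, |ρ z x - ρ s x - dz * F s x| ≤ dz * (C * ε') := by
        intro x
        have hder : ∀ τ ∈ Set.Icc s z,
            HasDerivWithinAt (fun u => ρ u x - u * F s x) (F τ x - F s x) (Set.Icc s z) τ := by
          intro τ hτ
          have h1 : HasDerivAt (fun u => ρ u x) (F τ x) τ := by
            rw [hFdef]; exact hode τ (hsubT τ hτ) x
          exact (h1.sub (hasDerivAt_mul_const (F s x))).hasDerivWithinAt
        have hbd : ∀ τ ∈ Set.Icc s z, ‖F τ x - F s x‖ ≤ C * ε' := by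
          intro τ hτ
          calc ‖F τ x - F s x‖ = |F τ x - F s x| := Real.norm_eq_abs _
            _ ≤ C * ‖ρ τ - ρ s‖ := hFlip τ (hsub τ hτ) s hsmem x
            _ ≤ C * ε' := mul_le_mul_of_nonneg_left (hnear τ hτ) hCn
        have hmv := Convex.norm_image_sub_le_of_norm_hasDerivWithin_le hder hbd
          (convex_Icc s z) (Set.left_mem_Icc.mpr hz1.le) (Set.right_mem_Icc.mpr hz1.le)
        rw [Real.norm_eq_abs, Real.norm_eq_abs, abs_of_pos (by linarith : (0:ℝ) < z - s)]
          at hmv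
        calc |ρ z x - ρ s x - dz * F s x|
            = |ρ z x - z * F s x - (ρ s x - s * F s x)| := by rw [hdzdef]; ring_nf
          _ ≤ C * ε' * (z - s) := hmv
          _ = dz * (C * ε') := by rw [hdzdef]; ring
      -- Step B: one-step positivity estimate
      have stepB : ∀ x, -(ρ s x + dz * F s x) ≤ N s + dz * (K * N s) := by
        intro x
        obtain ⟨c, hcdef⟩ : ∃ c : ℝ, c = ∫ y, aminus (x - y) * ρ s y := ⟨_, rfl⟩
        obtain ⟨Ip, hIpdef⟩ : ∃ Ip : ℝ, Ip = ∫ y, aplus (x - y) * ρ s y := ⟨_, rfl⟩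
        have hc2 : |c| ≤ Am * M := by
          rw [hcdef, hAmdef]
          exact (conv_abs_le aminus hminus_int hminus_nonneg (ρ s) x).trans
            (mul_le_mul_of_nonneg_left (hMb s hsmem) (integral_nonneg hminus_nonneg))
        have hIp2 : -(Ap * N s) ≤ Ip := by
          rw [hIpdef, hApdef]
          have := conv_ge aplus hplus_int hplus_nonneg (ρ s) x (-(N s)) (hlb s)
          rw [mul_neg] at this
          exact this
        have hu : -(ρ s x) ≤ N s := by linarith [hlb s x]
        have expand : -(ρ s x + dz * F s x)
            = (-(ρ s x)) * (1 - dz * (m + c)) - dz * Ip := by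
          rw [hcdef, hIpdef]; simp only [hFdef]; ring
        have hα0 : 0 ≤ 1 - dz * (m + c) := by
          have e1 : dz * (m + c) ≤ dz * (m + Am * M) :=
            mul_le_mul_of_nonneg_left (by linarith [le_abs_self c]) hdzpos.le
          have e2 : dz * (m + Am * M) ≤ h₀ * (m + Am * M) :=
            mul_le_mul_of_nonneg_right hdzh₀ (by nlinarith [mul_nonneg hAmn hMnonneg])
          linarith
        have hα1 : 1 - dz * (m + c) ≤ 1 + dz * (Am * M) := by
          have e1 : -(Am * M) ≤ m + c := by linarith [neg_abs_le c]
          have e2 : dz * (-(Am * M)) ≤ dz * (m + c) :=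
            mul_le_mul_of_nonneg_left e1 hdzpos.le
          nlinarith [e2]
        have step1 : (-(ρ s x)) * (1 - dz * (m + c)) ≤ N s * (1 + dz * (Am * M)) :=
          le_trans (mul_le_mul_of_nonneg_right hu hα0)
            (mul_le_mul_of_nonneg_left hα1 (hNnonneg s))
        have step2 : -(dz * Ip) ≤ dz * (Ap * N s) := by
          have := mul_le_mul_of_nonneg_left (show -Ip ≤ Ap * N s by linarith) hdzpos.le
          nlinarith [this]
        rw [expand, hKdef]
        nlinarith [step1, step2, hNnonneg s]
      -- combine
      obtain ⟨B, hBdef⟩ : ∃ B : ℝ, B = N s + dz * (K * N s) + dz * (C * ε') := ⟨_, rfl⟩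
      have hBnn : 0 ≤ B := by
        have := hNnonneg s
        have h1 : 0 ≤ dz * (K * N s) := mul_nonneg hdzpos.le (mul_nonneg hKn (hNnonneg s))
        have h2 : 0 ≤ dz * (C * ε') := mul_nonneg hdzpos.le (mul_nonneg hCn hε'pos.le)
        rw [hBdef]; linarith
      have hx : ∀ x, |min (ρ z x) 0| ≤ B := by
        intro x
        rcases le_or_gt 0 (ρ z x) with hx0 | hx0
        · rw [min_eq_right hx0, abs_zero]; exact hBnn
        · rw [min_eq_left hx0.le, abs_of_neg hx0]
          have hA := stepA x
          have hB := stepB x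
          have habs : -(ρ z x - ρ s x - dz * F s x) ≤ |ρ z x - ρ s x - dz * F s x| :=
            neg_le_abs _
          rw [hBdef]; linarith
      have hNz : N z ≤ B := by
        rw [hNs]
        refine (BoundedContinuousFunction.norm_le hBnn).mpr fun x => ?_
        have h2 : (ρ z ⊓ 0) x = min (ρ z x) 0 := by simp
        rw [Real.norm_eq_abs, h2]
        exact hx x
      have hslope : (z - s)⁻¹ * (N z - N s) ≤ K * N s + C * ε' := by
        have h1 : N z - N s ≤ dz * (K * N s + C * ε') := by
          rw [hBdef] at hNz; linarith [hNz]
        have h2 := mul_le_mul_of_nonneg_left h1 (inv_nonneg.mpr hdzpos.le)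
        rw [inv_mul_cancel_left₀ hdzpos.ne'] at h2
        rw [← hdzdef]
        exact h2
      linarith
    have hev : ∀ᶠ z in nhdsWithin s (Set.Ioi s), (z - s)⁻¹ * (N z - N s) < r :=
      Filter.eventually_of_mem (Ioo_mem_nhdsGT_of_mem ⟨le_refl s, by linarith⟩) main
    exact hev.frequently
  -- Grönwall
  have hbound : ∀ s ∈ Set.Ico (0:ℝ) t, K * N s ≤ K * N s + 0 := by
    intro s _; simp
  have grw := le_gronwallBound_of_liminf_deriv_right_le (f := N) (f' := fun s => K * N s)
      (δ := 0) (K := K) (ε := 0) (a := 0) (b := t)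
      hNcont.continuousOn hfreq hN0 hbound
  have := grw t ⟨ht0, le_refl t⟩
  simpa [gronwallBound_ε0_δ0] using this
end

section
/- Let b > m ≥ 0, c > 0, q = (b - m)/c, and let a₊, a₋ ∈ L¹(ℝ^d) be nonnegative with ∫a₊ = b, ∫a₋ = c, satisfying a₊(x)/b ≥ (1 - m/b)·a₋(x)/c for a.e. x. Suppose ρ_t is a nonnegative classical solution in C_b(ℝ^d) of ∂_tρ = -mρ - ρ(a₋*ρ) + a₊*ρ with ρ_0(x) < q for all x and sup ρ_0 < q. Then ρ_t(x) < q for all t ≥ 0 and x ∈ ℝ^d. -/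
open MeasureTheory

/-- Under condition (35) on the kernels, the region `{ρ < q}` below the carrying
capacity `q = (b - m)/c` is invariant for the kinetic spatial-logistic flow. -/
theorem stmt_15 (d : ℕ) (b m c q : ℝ) (hm : 0 ≤ m) (hbm : m < b) (hc : 0 < c)
    (hq : q = (b - m) / c)
    (aplus aminus : (Fin d → ℝ) → ℝ)
    (hplus_nonneg : ∀ x, 0 ≤ aplus x) (hminus_nonneg : ∀ x, 0 ≤ aminus x)
    (hplus_int : Integrable aplus) (hminus_int : Integrable aminus)
    (hb : (∫ y, aplus y) = b) (hcint : (∫ y, aminus y) = c)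
    (hker : ∀ᵐ x : Fin d → ℝ, aplus x / b ≥ (1 - m / b) * (aminus x / c))
    (ρ : ℝ → BoundedContinuousFunction (Fin d → ℝ) ℝ)
    (hcont : Continuous ρ)
    (hnonneg : ∀ t : ℝ, 0 ≤ t → ∀ x, 0 ≤ ρ t x)
    (hode : ∀ t : ℝ, 0 ≤ t → ∀ x : Fin d → ℝ,
      HasDerivAt (fun s => ρ s x)
        (-m * ρ t x - ρ t x * (∫ y, aminus (x - y) * ρ t y)
          + ∫ y, aplus (x - y) * ρ t y) t)
    (hinit : ∀ x, ρ 0 x < q) (hinit' : ∃ q' : ℝ, q' < q ∧ ∀ x, ρ 0 x ≤ q') :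
    ∀ t : ℝ, 0 ≤ t → ∀ x, ρ t x < q := by
  obtain ⟨q', hq'q, hq'⟩ := hinit'
  have hb0 : 0 < b := lt_of_le_of_lt hm hbm
  have hqc : q * c = b - m := by rw [hq]; field_simp
  have hq0 : 0 < q := by rw [hq]; exact div_pos (by linarith) hc
  -- kernel condition in the form q * a₋ ≤ a₊, a.e.
  have hker' : ∀ᵐ z : Fin d → ℝ, q * aminus z ≤ aplus z := by
    filter_upwards [hker] with z hz
    rw [ge_iff_le] at hz
    have h1 : ((1 : ℝ) - m / b) * (aminus z / c) * (b * c) ≤ aplus z / b * (b * c) :=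
      mul_le_mul_of_nonneg_right hz (by positivity)
    have hbne : b ≠ 0 := hb0.ne'
    have hcne : c ≠ 0 := hc.ne'
    field_simp at h1
    rw [hq, div_mul_eq_mul_div, div_le_iff₀ hc]
    have h2 : aplus z * (b * c) / b = aplus z * c := by field_simp
    linarith [h1, h2.ge, h2.le]
  -- the sup function
  set M : ℝ → ℝ := fun t => ‖ρ t‖ with hM_def
  have hMcont : Continuous M := continuous_norm.comp hcont
  have hle_M : ∀ t x, ρ t x ≤ M t := fun t x =>
    (le_abs_self _).trans ((ρ t).norm_coe_le_norm x)
  have hq'0 : 0 ≤ q' := le_trans (hnonneg 0 le_rfl (fun _ => 0)) (hq' _)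
  have hM0 : M 0 ≤ q' := by
    refine (BoundedContinuousFunction.norm_le hq'0).mpr fun x => ?_
    rw [Real.norm_eq_abs, abs_of_nonneg (hnonneg 0 le_rfl x)]
    exact hq' x
  by_contra hcon
  push_neg at hcon
  obtain ⟨t₀, ht₀, x₀, hx₀⟩ := hcon
  set S : Set ℝ := {t | 0 ≤ t ∧ q ≤ M t} with hS_def
  have hSne : S.Nonempty := ⟨t₀, ht₀, le_trans hx₀ (hle_M _ _)⟩
  have hSclosed : IsClosed S := by
    have : S = {t : ℝ | 0 ≤ t} ∩ {t : ℝ | q ≤ M t} := rfl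
    rw [this]
    exact (isClosed_le continuous_const continuous_id).inter
      (isClosed_le continuous_const hMcont)
  have hSbdd : BddBelow S := ⟨0, fun t ht => ht.1⟩
  set T := sInf S with hT_def
  have hTS : T ∈ S := hSclosed.csInf_mem hSne hSbdd
  have hT0 : 0 ≤ T := hTS.1
  have hltT : ∀ t, 0 ≤ t → t < T → M t < q := by
    intro t ht htT
    by_contra h
    push_neg at h
    exact absurd (csInf_le hSbdd ⟨ht, h⟩) (not_le.mpr htT)
  have hTpos : 0 < T := by
    rcases lt_or_eq_of_le hT0 with h | h
    · exact h
    · exfalso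
      have h2 : q ≤ M 0 := by rw [h]; exact hTS.2
      linarith
  have hMTq : M T ≤ q := by
    have h1 : Filter.Tendsto M (nhdsWithin T (Set.Iio T)) (nhds (M T)) :=
      (hMcont.tendsto T).mono_left nhdsWithin_le_nhds
    refine le_of_tendsto h1 ?_
    filter_upwards [Ioo_mem_nhdsLT_of_mem (Set.mem_Ioc.mpr ⟨hTpos, le_rfl⟩)] with t ht
    exact (hltT t ht.1.le ht.2).le
  have hρq : ∀ s ∈ Set.Icc (0:ℝ) T, ∀ y, ρ s y ≤ q := by
    intro s hs y
    rcases eq_or_lt_of_le hs.2 with h | h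
    · exact (hle_M s y).trans (h ▸ hMTq)
    · exact (hle_M s y).trans (hltT s hs.1 h).le
  -- the key derivative estimate
  have hderiv_le : ∀ s ∈ Set.Icc (0:ℝ) T, ∀ x : Fin d → ℝ,
      -m * ρ s x - ρ s x * (∫ y, aminus (x - y) * ρ s y)
          + (∫ y, aplus (x - y) * ρ s y) ≤ b * (q - ρ s x) := by
    intro s hs x
    set r := (ρ s x : ℝ) with hr
    have hr0 : 0 ≤ r := hnonneg s hs.1 x
    have hrq : r ≤ q := hρq s hs x
    have hplus' : Integrable (fun y => aplus (x - y)) := hplus_int.comp_sub_left x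
    have hminus' : Integrable (fun y => aminus (x - y)) := hminus_int.comp_sub_left x
    have hmeasρ : AEStronglyMeasurable (fun y => (ρ s y : ℝ)) volume :=
      (ρ s).continuous.aestronglyMeasurable
    have hbddρ : ∃ C, ∀ y, ‖(ρ s y : ℝ)‖ ≤ C := ⟨‖ρ s‖, fun y => (ρ s).norm_coe_le_norm y⟩
    have hIp : Integrable (fun y => aplus (x - y) * ρ s y) := by
      simpa [mul_comm] using hplus'.bdd_mul hmeasρ (ae_of_all _ (ρ s).norm_coe_le_norm)
    have hIm : Integrable (fun y => aminus (x - y) * ρ s y) := by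
      simpa [mul_comm] using hminus'.bdd_mul hmeasρ (ae_of_all _ (ρ s).norm_coe_le_norm)
    have hg_int : Integrable (fun y => aplus (x - y) - r * aminus (x - y)) :=
      hplus'.sub (hminus'.const_mul r)
    have hsub : (∫ y, aplus (x - y) * ρ s y) - r * (∫ y, aminus (x - y) * ρ s y)
        = ∫ y, (aplus (x - y) - r * aminus (x - y)) * ρ s y := by
      rw [← integral_const_mul, ← integral_sub hIp (hIm.const_mul r)]
      congr 1; funext y; ring
    have hker2 : ∀ᵐ y : Fin d → ℝ, q * aminus (x - y) ≤ aplus (x - y) :=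
      (Measure.measurePreserving_sub_left volume x).quasiMeasurePreserving.ae hker'
    have hint_lhs : Integrable (fun y => (aplus (x - y) - r * aminus (x - y)) * ρ s y) := by
      simpa [mul_comm] using hg_int.bdd_mul hmeasρ (ae_of_all _ (ρ s).norm_coe_le_norm)
    have hint_rhs : Integrable (fun y => (aplus (x - y) - r * aminus (x - y)) * q) :=
      hg_int.mul_const q
    have hae : ∀ᵐ y : Fin d → ℝ,
        (aplus (x - y) - r * aminus (x - y)) * ρ s y
          ≤ (aplus (x - y) - r * aminus (x - y)) * q := by
      filter_upwards [hker2] with y hy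
      have hg0 : 0 ≤ aplus (x - y) - r * aminus (x - y) := by
        nlinarith [hminus_nonneg (x - y)]
      exact mul_le_mul_of_nonneg_left (hρq s hs y) hg0
    have hmono := integral_mono_ae hint_lhs hint_rhs hae
    have eint : (∫ y, (aplus (x - y) - r * aminus (x - y)) * q) = (b - r * c) * q := by
      rw [integral_mul_const, integral_sub hplus' (hminus'.const_mul r), integral_const_mul,
        integral_sub_left_eq_self aplus volume x, integral_sub_left_eq_self aminus volume x,
        hb, hcint]
    have key : (∫ y, aplus (x - y) * ρ s y) - r * (∫ y, aminus (x - y) * ρ s y)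
        ≤ (b - r * c) * q := by
      rw [hsub]
      exact hmono.trans eint.le
    have h2 : r * (q * c) = r * (b - m) := by rw [hqc]
    nlinarith [key, h2]
  -- Gronwall comparison at time T
  have hE := Real.exp_pos (b * T)
  have hfinal : ∀ x, ρ T x ≤ q + (q' - q) * Real.exp (-(b * T)) := by
    intro x
    set v : ℝ → ℝ := fun s => (ρ s x - q) * Real.exp (b * s) with hv
    have hucont : Continuous fun s => (ρ s x : ℝ) :=
      (continuous_eval_const x).comp hcont
    have hvcont : Continuous v :=
      (hucont.sub continuous_const).mul
        (Real.continuous_exp.comp (continuous_const.mul continuous_id))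
    have hvderiv : ∀ s ∈ Set.Ioo (0:ℝ) T,
        HasDerivAt v
          ((-m * ρ s x - ρ s x * (∫ y, aminus (x - y) * ρ s y)
              + ∫ y, aplus (x - y) * ρ s y) * Real.exp (b * s)
            + (ρ s x - q) * (Real.exp (b * s) * b)) s := by
      intro s hs
      have hbs : HasDerivAt (fun s : ℝ => b * s) b s := by
        simpa using (hasDerivAt_id s).const_mul b
      exact ((hode s hs.1.le x).sub_const q).mul hbs.exp
    have hanti : AntitoneOn v (Set.Icc 0 T) := by
      apply antitoneOn_of_deriv_nonpos (convex_Icc 0 T) hvcont.continuousOn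
      · intro s hs
        rw [interior_Icc] at hs
        exact ((hvderiv s hs).differentiableAt).differentiableWithinAt
      · intro s hs
        rw [interior_Icc] at hs
        rw [(hvderiv s hs).deriv]
        have hle := hderiv_le s ⟨hs.1.le, hs.2.le⟩ x
        have hEs := Real.exp_pos (b * s)
        nlinarith [hle, hEs]
    have hvTv0 : v T ≤ v 0 :=
      hanti (Set.mem_Icc.mpr ⟨le_rfl, hT0⟩) (Set.mem_Icc.mpr ⟨hT0, le_rfl⟩) hT0
    have hv0 : v 0 ≤ q' - q := by
      simp only [hv, mul_zero, Real.exp_zero, mul_one]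
      linarith [hq' x]
    have h3 : ρ T x - q ≤ (q' - q) / Real.exp (b * T) := by
      rw [le_div_iff₀ hE]
      exact hvTv0.trans hv0
    rw [Real.exp_neg, ← div_eq_mul_inv]
    linarith [h3]
  set K := q + (q' - q) * Real.exp (-(b * T)) with hK
  have hEn := Real.exp_pos (-(b * T))
  have hKq : K < q := by
    have h2 := mul_neg_of_neg_of_pos (show q' - q < 0 by linarith) hEn
    simp only [hK]
    linarith
  have hK0 : 0 ≤ K := by
    have h1 : Real.exp (-(b * T)) ≤ 1 :=
      Real.exp_le_one_iff.mpr (neg_nonpos.mpr (mul_nonneg hb0.le hT0))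
    have h2 := mul_nonneg (show (0:ℝ) ≤ q - q' by linarith)
      (show (0:ℝ) ≤ 1 - Real.exp (-(b * T)) by linarith)
    simp only [hK]
    nlinarith [h2]
  have hMK : M T ≤ K := by
    refine (BoundedContinuousFunction.norm_le hK0).mpr fun x => ?_
    rw [Real.norm_eq_abs, abs_of_nonneg (hnonneg T hT0 x)]
    exact hfinal x
  exact absurd (hTS.2.trans hMK) (not_le.mpr hKq)
end
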